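/- Let G be an n-vertex graph, A ⊆ V(G), and d a positive integer. If M is a maximal matching of the bipartite graph G[A, V(G)\A], then the number of equivalence classes of the relation ≡^A_{d,1} on subsets of A is at most (2d+2)^{|M|}. Consequently, nec_{d,1}(A) ≤ (2d+2)^{mmw(A)}, where mmw(A) is the size of a maximum matching of G[A, V(G)\A]. -/

import Mathlib

open SimpleGraph

variable {V : Type*} [Fintype V] [DecidableEq V]

/-- The bipartite cut graph `G[A, V \ A]`. -/
def cutGraph (G : SimpleGraph V) (A : Set V) : SimpleGraph V where
  Adj u v := G.Adj u v ∧ ((u ∈ A ∧ v ∉ A) ∨ (u ∉ A ∧ v ∈ A))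
  symm := by
    constructor; intro u v h
    exact ⟨h.1.symm, h.2.elim (fun hx => Or.inr ⟨hx.2, hx.1⟩) (fun hx => Or.inl ⟨hx.2, hx.1⟩)⟩
  loopless := by constructor; intro v h; exact G.irrefl h.1

/-- The (d,1)-neighbor equivalence over `A`, as a setoid on subsets of `A`. -/
def necSetoid (G : SimpleGraph V) (A : Set V) (d : ℕ) : Setoid {S : Set V // S ⊆ A} :=
  ⟨fun B C => ∀ v ∉ A,
      min d (G.neighborSet v ∩ B.1).ncard = min d (G.neighborSet v ∩ C.1).ncard,
   ⟨fun _ _ _ => rfl,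
    fun h v hv => (h v hv).symm,
    fun h1 h2 v hv => (h1 v hv).trans (h2 v hv)⟩⟩

theorem stmt4 (G : SimpleGraph V) (A : Set V) (d : ℕ) (hd : 0 < d)
    (M : (cutGraph G A).Subgraph) (hM : M.IsMatching)
    (hmax : ∀ M' : (cutGraph G A).Subgraph, M'.IsMatching → M ≤ M' → M' = M) :
    Nat.card (Quotient (necSetoid G A d)) ≤ (2 * d + 2) ^ M.edgeSet.ncard ∧
    ∀ w : ℕ,
      IsGreatest {n | ∃ M'' : (cutGraph G A).Subgraph, M''.IsMatching ∧ M''.edgeSet.ncard = n} w →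
      Nat.card (Quotient (necSetoid G A d)) ≤ (2 * d + 2) ^ w := by
  classical
  -- choose oriented representatives of matching edges
  have hrep : ∀ e ∈ M.edgeSet, ∃ q : V × V,
      e = s(q.1, q.2) ∧ M.Adj q.1 q.2 ∧ q.1 ∈ A ∧ q.2 ∉ A := by
    intro e he
    induction e with
    | h u v =>
      rw [Subgraph.mem_edgeSet] at he
      rcases (M.adj_sub he).2 with h | h
      · exact ⟨(u, v), rfl, he, h.1, h.2⟩
      · exact ⟨(v, u), Sym2.eq_swap, he.symm, h.2, h.1⟩
  choose p hp1 hp2 hp3 hp4 using hrep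
  -- the fingerprint map
  set F : {S : Set V // S ⊆ A} → (M.edgeSet → Bool × Fin (d + 1)) :=
    fun S e =>
      (decide ((p e.1 e.2).1 ∈ S.1),
       ⟨min d (G.neighborSet (p e.1 e.2).2 ∩ S.1).ncard,
        Nat.lt_succ_of_le (min_le_left _ _)⟩) with hF
  -- every A-side neighbor of an M-unmatched vertex outside A is matched
  have hmatched : ∀ v ∉ A, v ∉ M.support → ∀ a ∈ A, G.Adj v a → a ∈ M.support := by
    intro v hv hvM a ha hadj
    by_contra haM
    have hcut : (cutGraph G A).Adj v a := ⟨hadj, Or.inr ⟨hv, ha⟩⟩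
    have hdisj : Disjoint M.support ((cutGraph G A).subgraphOfAdj hcut).support := by
      rw [support_subgraphOfAdj]
      rw [Set.disjoint_right]
      intro x hx
      rcases hx with h | h
      · simpa [h] using hvM
      · simp only [Set.mem_singleton_iff] at h; simpa [h] using haM
    have hM' : (M ⊔ (cutGraph G A).subgraphOfAdj hcut).IsMatching :=
      hM.sup (Subgraph.IsMatching.subgraphOfAdj hcut) hdisj
    have heq := hmax _ hM' le_sup_left
    have : M.Adj v a := by
      have : (M ⊔ (cutGraph G A).subgraphOfAdj hcut).Adj v a := by
        exact Or.inr (by simp)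
      rwa [heq] at this
    exact hvM ⟨a, this⟩
  -- every matched vertex in A is the A-endpoint of some edge
  have hAend : ∀ a ∈ A, a ∈ M.support → ∃ e, ∃ he : e ∈ M.edgeSet, (p e he).1 = a := by
    intro a ha ⟨w, hadj⟩
    have he : s(a, w) ∈ M.edgeSet := Subgraph.mem_edgeSet.mpr hadj
    refine ⟨s(a, w), he, ?_⟩
    have := hp1 _ he
    rw [Sym2.eq_iff] at this
    rcases this with ⟨h, -⟩ | ⟨h, -⟩
    · exact h.symm
    · exfalso; exact hp4 _ he (h ▸ ha)
  -- key: F determines the equivalence class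
  have hkey : ∀ B C : {S : Set V // S ⊆ A}, F B = F C → (necSetoid G A d).r B C := by
    intro B C hFBC v hv
    have h1 : ∀ e (he : e ∈ M.edgeSet), ((p e he).1 ∈ B.1 ↔ (p e he).1 ∈ C.1) := by
      intro e he
      have := congrFun hFBC ⟨e, he⟩
      have := congrArg Prod.fst this
      simpa [hF] using this
    have h2 : ∀ e (he : e ∈ M.edgeSet),
        min d (G.neighborSet (p e he).2 ∩ B.1).ncard
          = min d (G.neighborSet (p e he).2 ∩ C.1).ncard := by
      intro e he
      have := congrFun hFBC ⟨e, he⟩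
      have := congrArg (fun x => (Prod.snd x : Fin (d+1)).1) this
      simpa using this
    by_cases hvM : v ∈ M.support
    · obtain ⟨w, hadj⟩ := hvM
      have he : s(v, w) ∈ M.edgeSet := Subgraph.mem_edgeSet.mpr hadj
      have hv2 : (p _ he).2 = v := by
        have := hp1 _ he
        rw [Sym2.eq_iff] at this
        rcases this with ⟨h, -⟩ | ⟨h, -⟩
        · exfalso; exact hv (h ▸ hp3 _ he)
        · exact h.symm
      have := h2 _ he
      rwa [hv2] at this
    · have hsub : ∀ B' C' : {S : Set V // S ⊆ A},
          (∀ e (he : e ∈ M.edgeSet), ((p e he).1 ∈ B'.1 ↔ (p e he).1 ∈ C'.1)) →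
          G.neighborSet v ∩ B'.1 ⊆ G.neighborSet v ∩ C'.1 := by
        intro B' C' h1' a ⟨hav, haB⟩
        have ha : a ∈ A := B'.2 haB
        have haM : a ∈ M.support := hmatched v hv hvM a ha hav
        obtain ⟨e, he, hpe⟩ := hAend a ha haM
        exact ⟨hav, (hpe ▸ h1' e he).mp (hpe ▸ haB)⟩
      have : G.neighborSet v ∩ B.1 = G.neighborSet v ∩ C.1 :=
        Set.Subset.antisymm (hsub B C h1)
          (hsub C B fun e he => (h1 e he).symm)
      rw [this]
  -- injectivity of F ∘ out
  have hinj : Function.Injective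
      (fun q : Quotient (necSetoid G A d) => F (Quotient.out q)) := by
    intro x y h
    have := hkey _ _ h
    calc x = Quotient.mk _ (Quotient.out x) := (Quotient.out_eq x).symm
      _ = Quotient.mk _ (Quotient.out y) := Quotient.sound this
      _ = y := Quotient.out_eq y
  have hcard : Nat.card (Quotient (necSetoid G A d)) ≤ (2 * d + 2) ^ M.edgeSet.ncard := by
    have hle := Nat.card_le_card_of_injective _ hinj
    have : Nat.card (M.edgeSet → Bool × Fin (d + 1)) = (2 * d + 2) ^ M.edgeSet.ncard := by
      rw [Nat.card_fun, Nat.card_prod, Nat.card_eq_fintype_card (α := Bool),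
        Nat.card_eq_fintype_card (α := Fin (d+1)), Nat.card_coe_set_eq]
      simp [Fintype.card_fin]
      ring_nf
    omega
  refine ⟨hcard, fun w hw => ?_⟩
  have hle : M.edgeSet.ncard ≤ w := hw.2 ⟨M, hM, rfl⟩
  exact le_trans hcard (Nat.pow_le_pow_right (by omega) hle)
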